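/- Conformal coverage bound (lower bound): let U₁, …, U_{n+1} be exchangeable real-valued random variables, α ∈ (0,1), and let τ be the ⌈(1−α)(n+1)⌉-th smallest value among U₁, …, U_n. Then ℙ(U_{n+1} ≤ τ) ≥ 1 − α. -/

import Mathlib

open MeasureTheory
open scoped ENNReal

/-- The `k`-th smallest element (1-indexed) of a finite multiset of reals. -/
noncomputable def kthSmallest (s : Multiset ℝ) (k : ℕ) : ℝ :=
  (s.sort (· ≤ ·)).getD (k - 1) 0

lemma le_kth_of_countP_lt (s : Multiset ℝ) (k : ℕ) (hk1 : 1 ≤ k) (hks : k ≤ s.card)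
    (u : ℝ) (h : Multiset.countP (fun a => a < u) s < k) : u ≤ kthSmallest s k := by
  by_contra hlt
  push_neg at hlt
  set l := s.sort (· ≤ ·) with hl
  have hsort : l.Pairwise (· ≤ ·) := s.pairwise_sort _
  have hlen : l.length = s.card := s.length_sort _
  have hcount : Multiset.countP (fun a => a < u) s = l.countP (fun a => decide (a < u)) := by
    conv_lhs => rw [← Multiset.sort_eq s (· ≤ ·)]
    rfl
  have hk1' : k - 1 < l.length := by omega
  have hc : kthSmallest s k = l.get ⟨k - 1, hk1'⟩ := by
    simp [kthSmallest, ← hl, List.getD_eq_getElem?_getD, List.getElem?_eq_getElem hk1']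
  have htake : ∀ a ∈ l.take k, a < u := by
    intro a ha
    rw [List.mem_take_iff_getElem] at ha
    obtain ⟨i, hi, rfl⟩ := ha
    have hik : i ≤ k - 1 := by omega
    have : l[i] ≤ l.get ⟨k - 1, hk1'⟩ := by
      rcases lt_or_eq_of_le hik with hik' | hik'
      · exact List.pairwise_iff_getElem.mp hsort i (k-1) _ _ hik'
      · simp [List.get, hik']
    rw [hc] at hlt
    exact lt_of_le_of_lt this hlt
  have hcp : (l.take k).countP (fun a => decide (a < u)) = (l.take k).length :=
    List.countP_eq_length.mpr (by intro a ha; simpa using htake a ha)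
  have hlenTake : (l.take k).length = k := by
    rw [List.length_take]; omega
  have : k ≤ l.countP (fun a => decide (a < u)) := by
    conv_rhs => rw [← List.take_append_drop k l]
    rw [List.countP_append, hcp, hlenTake]
    omega
  omega

/-- The strict rank of coordinate `j`: number of coordinates strictly below `x j`. -/
noncomputable def rnk {m : ℕ} (x : Fin m → ℝ) (j : Fin m) : ℕ :=
  (Finset.univ.filter fun i => x i < x j).card

lemma rnk_comp {m : ℕ} (x : Fin m → ℝ) (σ : Equiv.Perm (Fin m)) (j : Fin m) :
    rnk (x ∘ σ) j = rnk x (σ j) := by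
  unfold rnk
  apply Finset.card_bij' (fun i _ => σ i) (fun i _ => σ.symm i) <;>
    intro a ha <;> simp_all

lemma k_le_card_rnk_lt {m : ℕ} (x : Fin m → ℝ) (k : ℕ) (hk : k ≤ m) :
    k ≤ (Finset.univ.filter fun j => rnk x j < k).card := by
  set σ := Tuple.sort x with hσ
  have hmono : Monotone (x ∘ σ) := Tuple.monotone_sort x
  have key : ∀ i : Fin m, (i : ℕ) < k → rnk x (σ i) < k := by
    intro i hi
    rw [← rnk_comp x σ i]
    have hsub : (Finset.univ.filter fun l => (x ∘ σ) l < (x ∘ σ) i) ⊆ Finset.Iio i := by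
      intro l hl
      simp only [Finset.mem_filter, Finset.mem_Iio] at hl ⊢
      by_contra h
      push_neg at h
      exact absurd (hmono h) (not_le.mpr hl.2)
    calc rnk (x ∘ σ) i ≤ (Finset.Iio i).card := Finset.card_le_card hsub
      _ = i := Fin.card_Iio i
      _ < k := hi
  classical
  have himg : ((Finset.univ.filter fun i : Fin m => (i : ℕ) < k).image σ)
      ⊆ Finset.univ.filter fun j => rnk x j < k := by
    intro j hj
    simp only [Finset.mem_image, Finset.mem_filter] at hj ⊢
    obtain ⟨i, ⟨-, hi⟩, rfl⟩ := hj
    exact ⟨Finset.mem_univ _, key i hi⟩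
  have hcardimg : ((Finset.univ.filter fun i : Fin m => (i : ℕ) < k).image σ).card
      = (Finset.univ.filter fun i : Fin m => (i : ℕ) < k).card :=
    Finset.card_image_of_injective _ σ.injective
  have hcardk : (Finset.univ.filter fun i : Fin m => (i : ℕ) < k).card = k := by
    have : (Finset.univ.filter fun i : Fin m => (i : ℕ) < k)
        = Finset.map (Fin.castLEEmb hk) Finset.univ := by
      ext i
      simp only [Finset.mem_filter, Finset.mem_univ, true_and, Finset.mem_map,
        Fin.castLEEmb_apply]
      constructor
      · intro hi; exact ⟨⟨i, hi⟩, rfl⟩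
      · rintro ⟨j, rfl⟩; exact j.2
    rw [this, Finset.card_map, Finset.card_univ, Fintype.card_fin]
  calc k = _ := hcardk.symm
    _ = _ := hcardimg.symm
    _ ≤ _ := Finset.card_le_card himg

lemma rnk_measurableSet {m : ℕ} (j : Fin m) (k : ℕ) :
    MeasurableSet {x : Fin m → ℝ | rnk x j < k} := by
  have heq : (fun x : Fin m → ℝ => rnk x j)
      = fun x => ∑ i : Fin m, if x i < x j then 1 else 0 := by
    funext x
    simpa [rnk] using (Finset.natCast_card_filter (fun i => x i < x j) Finset.univ)
  have hm : Measurable fun x : Fin m → ℝ => rnk x j := by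
    rw [heq]
    exact Finset.measurable_sum _ (fun i _ => Measurable.ite
      (measurableSet_lt (measurable_pi_apply i) (measurable_pi_apply j))
      measurable_const measurable_const)
  have : {x : Fin m → ℝ | rnk x j < k} = (fun x => rnk x j) ⁻¹' {c | c < k} := rfl
  rw [this]
  exact hm MeasurableSet.of_discrete

theorem conformal_coverage_lower_bound
    {Ω : Type*} [MeasurableSpace Ω] (μ : Measure Ω) [IsProbabilityMeasure μ]
    (n : ℕ) (U : Fin (n + 1) → Ω → ℝ) (hU : ∀ i, Measurable (U i))
    (hexch : ∀ σ : Equiv.Perm (Fin (n + 1)),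
      Measure.map (fun ω i => U (σ i) ω) μ = Measure.map (fun ω i => U i ω) μ)
    (α : ℝ) (hα0 : 0 < α) (hα1 : α < 1)
    (k : ℕ) (hk : k = ⌈(1 - α) * (n + 1)⌉₊) (hkn : k ≤ n)
    (τ : Ω → ℝ)
    (hτ : ∀ ω, τ ω = kthSmallest
      (Multiset.map (fun i : Fin n => U i.castSucc ω) Finset.univ.val) k) :
    ENNReal.ofReal (1 - α) ≤ μ {ω | U (Fin.last n) ω ≤ τ ω} := by
  classical
  have hk1 : 1 ≤ k := by
    rw [hk]
    refine Nat.one_le_iff_ne_zero.mpr (Nat.ceil_pos.mpr (mul_pos (by linarith) (by positivity))).ne'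
  -- The joint random vector
  set V : Ω → (Fin (n + 1) → ℝ) := fun ω i => U i ω with hV
  have hVmeas : Measurable V := measurable_pi_lambda _ (fun i => hU i)
  -- the events A j
  set A : Fin (n + 1) → Set Ω := fun j => V ⁻¹' {x | rnk x j < k} with hA
  have hAmeas : ∀ j, MeasurableSet (A j) := fun j => hVmeas (rnk_measurableSet j k)
  -- all A j have the same measure
  have hAeq : ∀ j, μ (A j) = μ (A (Fin.last n)) := by
    intro j
    set σ : Equiv.Perm (Fin (n + 1)) := Equiv.swap j (Fin.last n) with hσ
    have hW : Measurable (fun ω (i : Fin (n + 1)) => U (σ i) ω) :=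
      measurable_pi_lambda _ (fun i => hU (σ i))
    have h1 : Measure.map (fun ω (i : Fin (n + 1)) => U (σ i) ω) μ
        {x | rnk x (Fin.last n) < k}
        = Measure.map V μ {x | rnk x (Fin.last n) < k} := by
      rw [hexch σ]
    rw [Measure.map_apply hW (rnk_measurableSet _ k),
      Measure.map_apply hVmeas (rnk_measurableSet _ k)] at h1
    have hpre : (fun ω (i : Fin (n + 1)) => U (σ i) ω) ⁻¹' {x | rnk x (Fin.last n) < k}
        = A j := by
      ext ω
      simp only [Set.mem_preimage, Set.mem_setOf_eq, hA]
      have : (fun i => U (σ i) ω) = V ω ∘ σ := rfl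
      rw [this, rnk_comp (V ω) σ (Fin.last n), hσ, Equiv.swap_apply_right]
    rw [hpre] at h1
    exact h1
  -- the pointwise counting bound
  have hcount : ∀ ω, (k : ℝ≥0∞) ≤ ∑ j : Fin (n + 1), (A j).indicator (fun _ => 1) ω := by
    intro ω
    have : ∑ j : Fin (n + 1), (A j).indicator (fun _ => (1 : ℝ≥0∞)) ω
        = ((Finset.univ.filter fun j : Fin (n + 1) => rnk (V ω) j < k).card : ℝ≥0∞) := by
      rw [Finset.natCast_card_filter]
      congr 1
      funext j
      simp [Set.indicator_apply, hA]
    rw [this]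
    exact_mod_cast Nat.cast_le.mpr (k_le_card_rnk_lt (V ω) k (by omega))
  -- summing measures
  have hsum : (k : ℝ≥0∞) ≤ ∑ j : Fin (n + 1), μ (A j) := by
    have h1 : ∑ j : Fin (n + 1), μ (A j)
        = ∫⁻ ω, ∑ j : Fin (n + 1), (A j).indicator (fun _ => 1) ω ∂μ := by
      rw [lintegral_finset_sum _ (fun j _ =>
        (measurable_const.indicator (hAmeas j)))]
      exact Finset.sum_congr rfl fun j _ => (lintegral_indicator_one (hAmeas j)).symm
    rw [h1]
    calc (k : ℝ≥0∞) = ∫⁻ _, (k : ℝ≥0∞) ∂μ := by simp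
      _ ≤ _ := lintegral_mono fun ω => hcount ω
  -- hence (n+1) * μ (A last) ≥ k
  have hnk : (k : ℝ≥0∞) ≤ (n + 1 : ℝ≥0∞) * μ (A (Fin.last n)) := by
    calc (k : ℝ≥0∞) ≤ ∑ j : Fin (n + 1), μ (A j) := hsum
      _ = ∑ _j : Fin (n + 1), μ (A (Fin.last n)) := Finset.sum_congr rfl fun j _ => hAeq j
      _ = (n + 1 : ℕ) * μ (A (Fin.last n)) := by
          rw [Finset.sum_const, Finset.card_univ, Fintype.card_fin, nsmul_eq_mul]
      _ = (n + 1 : ℝ≥0∞) * μ (A (Fin.last n)) := by push_cast; ring_nf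
  -- (1 - α) ≤ μ (A last)
  have hofReal : ENNReal.ofReal (1 - α) ≤ μ (A (Fin.last n)) := by
    have hreal : (1 - α) * (n + 1) ≤ (k : ℝ) := by
      rw [hk]; exact_mod_cast Nat.le_ceil _
    have h2 : (n + 1 : ℝ≥0∞) * ENNReal.ofReal (1 - α)
        ≤ (n + 1 : ℝ≥0∞) * μ (A (Fin.last n)) := by
      refine le_trans ?_ hnk
      have : (n + 1 : ℝ≥0∞) * ENNReal.ofReal (1 - α)
          = ENNReal.ofReal ((1 - α) * (n + 1)) := by
        rw [ENNReal.ofReal_mul (by linarith), mul_comm]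
        congr 1
        rw [show ((n : ℝ) + 1) = ((n + 1 : ℕ) : ℝ) by push_cast; ring,
          ENNReal.ofReal_natCast]
        push_cast; ring_nf
      rw [this]
      calc ENNReal.ofReal ((1 - α) * (n + 1)) ≤ ENNReal.ofReal (k : ℝ) :=
            ENNReal.ofReal_le_ofReal hreal
        _ = (k : ℝ≥0∞) := ENNReal.ofReal_natCast k
    exact (ENNReal.mul_le_mul_iff_right (by norm_num) (by norm_num)).mp h2
  -- A last ⊆ the coverage event
  refine le_trans hofReal (measure_mono ?_)
  intro ω hω
  simp only [hA, Set.mem_preimage, Set.mem_setOf_eq] at hω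
  simp only [Set.mem_setOf_eq]
  rw [hτ ω]
  refine le_kth_of_countP_lt _ k hk1 ?_ _ ?_
  · simp [Multiset.card_map]
    omega
  · -- relate countP over Fin n to rnk over Fin (n+1)
    rw [Multiset.countP_map]
    have hfil : (Finset.univ.val.filter fun i : Fin n =>
        U i.castSucc ω < U (Fin.last n) ω).card
        = (Finset.univ.filter fun i : Fin n =>
          U i.castSucc ω < U (Fin.last n) ω).card := rfl
    rw [hfil]
    have hr : rnk (V ω) (Fin.last n)
        = (Finset.univ.filter fun i : Fin n =>
          U i.castSucc ω < U (Fin.last n) ω).card := by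
      unfold rnk
      have h1 : ((Finset.univ.filter fun i : Fin (n+1) =>
          V ω i < V ω (Fin.last n)).card : ℕ)
          = ∑ i : Fin (n+1), if U i ω < U (Fin.last n) ω then 1 else 0 := by
        simpa [hV] using (Finset.natCast_card_filter
          (fun i : Fin (n+1) => V ω i < V ω (Fin.last n)) Finset.univ)
      have h2 : ((Finset.univ.filter fun i : Fin n =>
          U i.castSucc ω < U (Fin.last n) ω).card : ℕ)
          = ∑ i : Fin n, if U i.castSucc ω < U (Fin.last n) ω then 1 else 0 := by
        simpa using (Finset.natCast_card_filter
          (fun i : Fin n => U i.castSucc ω < U (Fin.last n) ω) Finset.univ)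
      rw [h1, h2, Fin.sum_univ_castSucc]
      simp
    omega
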